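/- The functions I₁ = 2√r cos(θ/2) - f and I₂ = 2√r sin(θ/2) - g, where r = √(f'² + g'²) and θ = arctan(g'/f'), are first integrals of the system f'' = (f'² + g'²)^{3/4} cos((3/2) arctan(g'/f')), g'' = (f'² + g'²)^{3/4} sin((3/2) arctan(g'/f')), on solutions with f' > 0. -/

import Mathlib

open Real

lemma key_pt (f g f' g' f'' g'' : ℝ → ℝ) (x : ℝ)
    (hf : HasDerivAt f (f' x) x) (hfp : HasDerivAt f' (f'' x) x)
    (hg : HasDerivAt g (g' x) x) (hgp : HasDerivAt g' (g'' x) x)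
    (hu : 0 < f' x)
    (o1 : f'' x = (f' x ^ 2 + g' x ^ 2) ^ ((3:ℝ)/4) * cos ((3/2) * arctan (g' x / f' x)))
    (o2 : g'' x = (f' x ^ 2 + g' x ^ 2) ^ ((3:ℝ)/4) * sin ((3/2) * arctan (g' x / f' x))) :
    HasDerivAt (fun t => 2 * Real.sqrt (Real.sqrt (f' t ^ 2 + g' t ^ 2))
        * cos (arctan (g' t / f' t) / 2) - f t) 0 x ∧
    HasDerivAt (fun t => 2 * Real.sqrt (Real.sqrt (f' t ^ 2 + g' t ^ 2))
        * sin (arctan (g' t / f' t) / 2) - g t) 0 x := by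
  have hS0 : 0 < f' x ^ 2 + g' x ^ 2 := by positivity
  have hS : HasDerivAt (fun t => f' t ^ 2 + g' t ^ 2)
      (2 * f' x * f'' x + 2 * g' x * g'' x) x := by
    have := (hfp.pow 2).add (hgp.pow 2)
    norm_num at this ⊢
    exact this
  have h1 := hS.sqrt hS0.ne'
  have hsq0 : Real.sqrt (f' x ^ 2 + g' x ^ 2) ≠ 0 := (Real.sqrt_pos.2 hS0).ne'
  have h2 := h1.sqrt hsq0
  have hdq := hgp.div hfp hu.ne'
  have ha := hdq.arctan
  have hh := ha.div_const 2
  have H1 := ((h2.const_mul 2).mul hh.cos).sub hf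
  have H2 := ((h2.const_mul 2).mul hh.sin).sub hg
  -- notation
  set u := f' x with hu_def
  set v := g' x with hv_def
  set a := arctan (v / u) with ha_def
  set q := Real.sqrt (Real.sqrt (u ^ 2 + v ^ 2)) with hq_def
  set c := Real.cos (a / 2) with hc_def
  set s := Real.sin (a / 2) with hs_def
  have hq0 : 0 < q := Real.sqrt_pos.2 (Real.sqrt_pos.2 hS0)
  have hq2 : Real.sqrt (u ^ 2 + v ^ 2) = q ^ 2 := by
    rw [hq_def, Real.sq_sqrt (Real.sqrt_nonneg _)]
  have hq4 : u ^ 2 + v ^ 2 = q ^ 4 := by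
    have h := Real.sq_sqrt hS0.le
    rw [hq2] at h; rw [← h]; ring
  have pyth : s ^ 2 + c ^ 2 = 1 := Real.sin_sq_add_cos_sq _
  have hden : 1 + (v / u) ^ 2 = q ^ 4 / u ^ 2 := by
    rw [← hq4]; field_simp
  have hsd : Real.sqrt (1 + (v / u) ^ 2) = q ^ 2 / u := by
    rw [hden, show q ^ 4 / u ^ 2 = (q ^ 2 / u) ^ 2 by ring,
      Real.sqrt_sq (by positivity)]
  have hcc : Real.cos a = 2 * c ^ 2 - 1 := by
    rw [show a = 2 * (a / 2) by ring, Real.cos_two_mul, ← hc_def]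
  have hss : Real.sin a = 2 * s * c := by
    rw [show a = 2 * (a / 2) by ring, Real.sin_two_mul, ← hs_def, ← hc_def]
  have hu_eq : u = q ^ 2 * (2 * c ^ 2 - 1) := by
    have h := Real.cos_arctan (v / u)
    rw [← ha_def, hsd, hcc] at h
    rw [one_div_div] at h
    field_simp at h
    linarith [h]
  have hv_eq : v = q ^ 2 * (2 * s * c) := by
    have h := Real.sin_arctan (v / u)
    rw [← ha_def, hsd, hss] at h
    have haux : v / u / (q ^ 2 / u) = v / q ^ 2 := by field_simp
    rw [haux] at h
    rw [h]
    field_simp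
  have hP : (u ^ 2 + v ^ 2) ^ ((3:ℝ)/4) = q ^ 3 := by
    rw [hq4, ← Real.rpow_natCast q 4, ← Real.rpow_mul hq0.le,
      ← Real.rpow_natCast q 3]
    norm_num
  have hC3 : Real.cos (3 / 2 * a) = c * (2 * c ^ 2 - 1) - s * (2 * s * c) := by
    rw [show (3:ℝ) / 2 * a = a / 2 + 2 * (a / 2) by ring, Real.cos_add,
      Real.cos_two_mul, Real.sin_two_mul, ← hc_def, ← hs_def]
  have hS3 : Real.sin (3 / 2 * a) = s * (2 * c ^ 2 - 1) + c * (2 * s * c) := by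
    rw [show (3:ℝ) / 2 * a = a / 2 + 2 * (a / 2) by ring, Real.sin_add,
      Real.cos_two_mul, Real.sin_two_mul, ← hc_def, ← hs_def]
  have hnum1 : 2 * u * f'' x + 2 * v * g'' x = 2 * q ^ 5 * c := by
    rw [o1, o2, hP, hC3, hS3, hu_eq, hv_eq]
    linear_combination (8 * q ^ 5 * c ^ 3) * pyth
  have hnum2 : g'' x * u - v * f'' x = q ^ 5 * s := by
    rw [o1, o2, hP, hC3, hS3, hu_eq, hv_eq]
    linear_combination (4 * q ^ 5 * s * c ^ 2) * pyth
  have hθ : 1 / (1 + (v / u) ^ 2) * ((g'' x * u - v * f'' x) / u ^ 2) = q * s := by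
    rw [hnum2, hden]
    field_simp
  constructor
  · refine H1.congr_deriv (Eq.symm ?_)
    rw [Pi.div_apply, ← hu_def, ← hv_def, ← ha_def, ← hc_def, ← hs_def]
    rw [hq2, hnum1, hθ, hu_eq]
    field_simp
    linear_combination (q ^ 2) * pyth
  · refine H2.congr_deriv (Eq.symm ?_)
    rw [Pi.div_apply, ← hu_def, ← hv_def, ← ha_def, ← hc_def, ← hs_def]
    rw [hq2, hnum1, hθ, hv_eq]
    field_simp
    ring

open Real in
/-- First integrals `I₁ = 2√r cos(θ/2) - f`, `I₂ = 2√r sin(θ/2) - g`, where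
`r = √(f'² + g'²)` and `θ = arctan(g'/f')`, of the system
`f'' = (f'²+g'²)^{3/4} cos((3/2) arctan(g'/f'))`,
`g'' = (f'²+g'²)^{3/4} sin((3/2) arctan(g'/f'))` on solutions with `f' > 0`. -/
theorem first_integrals_case_N351_I12
    (I : Set ℝ) (hI : IsOpen I)
    (f g f' g' f'' g'' : ℝ → ℝ)
    (hf : ∀ x, HasDerivAt f (f' x) x) (hf' : ∀ x, HasDerivAt f' (f'' x) x)
    (hg : ∀ x, HasDerivAt g (g' x) x) (hg' : ∀ x, HasDerivAt g' (g'' x) x)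
    (hpos : ∀ x ∈ I, 0 < f' x)
    (ode1 : ∀ x ∈ I, f'' x = (f' x ^ 2 + g' x ^ 2) ^ ((3:ℝ)/4)
        * cos ((3/2) * arctan (g' x / f' x)))
    (ode2 : ∀ x ∈ I, g'' x = (f' x ^ 2 + g' x ^ 2) ^ ((3:ℝ)/4)
        * sin ((3/2) * arctan (g' x / f' x))) :
    (∀ x ∈ I, deriv (fun t => 2 * Real.sqrt (Real.sqrt (f' t ^ 2 + g' t ^ 2))
        * cos (arctan (g' t / f' t) / 2) - f t) x = 0) ∧
    (∀ x ∈ I, deriv (fun t => 2 * Real.sqrt (Real.sqrt (f' t ^ 2 + g' t ^ 2))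
        * sin (arctan (g' t / f' t) / 2) - g t) x = 0) := by
  constructor
  · intro x hx
    exact ((key_pt f g f' g' f'' g'' x (hf x) (hf' x) (hg x) (hg' x)
      (hpos x hx) (ode1 x hx) (ode2 x hx)).1).deriv
  · intro x hx
    exact ((key_pt f g f' g' f'' g'' x (hf x) (hf' x) (hg x) (hg' x)
      (hpos x hx) (ode1 x hx) (ode2 x hx)).2).deriv
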